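/- arXiv:2110.07945 — 2 statements merged into one kernel-verified Lean document; each statement's English description precedes it below -/
import Mathlib

section
/- There exist a perfect tree p ⊆ 2^{<ω} and a coloring c : p → 2 such that for every perfect tree q ⊆ p the set H_c(q) = {n ∈ ω : c is constant on q ∩ 2^n} has asymptotic density zero. Consequently, the density zero ideal Z is not an HL ideal. -/
open Set

/-- `p ⊆ 2^{<ω}` is a tree: nonempty, closed under initial segments,
without maximal elements. -/
def IsTree (p : Set (List Bool)) : Prop :=
  p.Nonempty ∧ (∀ s ∈ p, ∀ t : List Bool, t <+: s → t ∈ p) ∧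
    ∀ s ∈ p, ∃ t ∈ p, s <+: t ∧ s ≠ t

/-- `p` is a perfect tree: a tree in which every node has two
incomparable extensions in `p`. -/
def IsPerfectTree (p : Set (List Bool)) : Prop :=
  IsTree p ∧ ∀ s ∈ p, ∃ t₀ ∈ p, ∃ t₁ ∈ p,
    s <+: t₀ ∧ s <+: t₁ ∧ ¬ t₀ <+: t₁ ∧ ¬ t₁ <+: t₀

/-- `p↾A`: the nodes of `p` whose length belongs to `A`. -/
def restrictTree (p : Set (List Bool)) (A : Set ℕ) : Set (List Bool) :=
  {s ∈ p | s.length ∈ A}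

/-- `R` is a Halpern–Läuchli family: for every coloring `c : 2^{<ω} → 2`
there are a perfect tree `p` and `A ∈ R` with `c` constant on `p↾A`. -/
def IsHLFamily (R : Set (Set ℕ)) : Prop :=
  ∀ c : List Bool → Bool, ∃ p : Set (List Bool), ∃ A ∈ R,
    IsPerfectTree p ∧ ∃ i : Bool, ∀ s ∈ restrictTree p A, c s = i

/-- `x ∈ 2^ω` is a branch of `p`. -/
def IsBranch (p : Set (List Bool)) (x : ℕ → Bool) : Prop :=
  ∀ n : ℕ, (List.ofFn fun i : Fin n => x i) ∈ p

/-- `R` is a reaping family. -/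
def IsReapingFamily (R : Set (Set ℕ)) : Prop :=
  ∀ B : Set ℕ, B.Infinite → ∃ A ∈ R, A ⊆ B ∨ A ∩ B = ∅

/-- `I` is an ideal on `X`: contains all finite sets, is proper, and is
closed under subsets and finite unions. -/
def IsIdealOn {X : Type*} (I : Set (Set X)) : Prop :=
  (∀ A : Set X, A.Finite → A ∈ I) ∧ (univ : Set X) ∉ I ∧
    (∀ A B : Set X, A ⊆ B → B ∈ I → A ∈ I) ∧
    ∀ A B : Set X, A ∈ I → B ∈ I → A ∪ B ∈ I

/-- An ideal `I` on `ω` is HL if the family of infinite sets in `I⁺` is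
a Halpern–Läuchli family. -/
def IsHLIdeal (I : Set (Set ℕ)) : Prop :=
  IsHLFamily {A | A ∉ I ∧ A.Infinite}

/-- An ideal on a countable set `X` is HL if its image under some
(equivalently, any) bijection `X ≃ ℕ` is an HL ideal on `ω`. -/
def IsHLIdealOnCountable {X : Type*} (I : Set (Set X)) : Prop :=
  ∃ e : X ≃ ℕ, IsHLIdeal ((fun A : Set X => e '' A) '' I)

/-- The Katětov order on ideals. -/
def KatetovLE {X Y : Type*} (I : Set (Set X)) (J : Set (Set Y)) : Prop :=
  ∃ f : Y → X, ∀ A ∈ I, f ⁻¹' A ∈ J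

/-- The reaping number `𝔯`. -/
noncomputable def frakR : Cardinal :=
  sInf {κ | ∃ R : Set (Set ℕ), (∀ A ∈ R, A.Infinite) ∧ IsReapingFamily R ∧
    κ = Cardinal.mk ↥R}

/-- The density zero ideal `Z`. -/
def densityZero : Set (Set ℕ) :=
  {A | Filter.Tendsto (fun n : ℕ => ((A ∩ Iio n).ncard : ℝ) / (n : ℝ))
    Filter.atTop (nhds 0)}

namespace Stmt16Aux

variable {q : Set (List Bool)}

/-- the set of nodes of `q` at level `n` -/
def lev (q : Set (List Bool)) (n : ℕ) : Set (List Bool) := {s | s ∈ q ∧ s.length = n}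

lemma take_mem (hq : IsPerfectTree q) {s : List Bool} (hs : s ∈ q) (n : ℕ) :
    s.take n ∈ q :=
  hq.1.2.1 s hs _ (List.take_prefix n s)

lemma nil_mem (hq : IsPerfectTree q) : [] ∈ q := by
  obtain ⟨s, hs⟩ := hq.1.1
  exact hq.1.2.1 s hs [] List.nil_prefix

lemma extend_one (hq : IsPerfectTree q) {s : List Bool} (hs : s ∈ q) :
    ∃ t ∈ q, s <+: t ∧ t.length = s.length + 1 := by
  obtain ⟨t, ht, hpre, hne⟩ := hq.1.2.2 s hs
  have hlt : s.length < t.length := by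
    rcases lt_or_eq_of_le hpre.length_le with h | h
    · exact h
    · exact absurd (hpre.eq_of_length h) hne
  refine ⟨t.take (s.length + 1), take_mem hq ht _, ?_, ?_⟩
  · exact List.prefix_take_iff.mpr ⟨hpre, by omega⟩
  · rw [List.length_take]; omega

lemma extend_to (hq : IsPerfectTree q) {s : List Bool} (hs : s ∈ q) {n : ℕ}
    (hn : s.length ≤ n) : ∃ t ∈ q, s <+: t ∧ t.length = n := by
  induction n, hn using Nat.le_induction with
  | base => exact ⟨s, hs, List.prefix_rfl, rfl⟩
  | succ n _ ih =>
      obtain ⟨t, ht, hpre, hlen⟩ := ih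
      obtain ⟨u, hu, hpre2, hlen2⟩ := extend_one hq ht
      exact ⟨u, hu, hpre.trans hpre2, by omega⟩

lemma length_set_finite (n : ℕ) : {s : List Bool | s.length = n}.Finite := by
  have h : {s : List Bool | s.length = n} ⊆ (fun f : Fin n → Bool => List.ofFn f) '' Set.univ := by
    intro s hs
    simp only [Set.mem_setOf_eq] at hs
    subst hs
    exact ⟨s.get, Set.mem_univ _, List.ofFn_get s⟩
  exact Set.Finite.subset (Set.Finite.image _ (Set.finite_univ)) h

lemma lev_finite (q : Set (List Bool)) (n : ℕ) : (lev q n).Finite :=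
  (length_set_finite n).subset fun _ hs => hs.2

lemma lev_nonempty (hq : IsPerfectTree q) (n : ℕ) : ∃ s, s ∈ q ∧ s.length = n := by
  obtain ⟨t, ht, _, hlen⟩ := extend_to hq (nil_mem hq) (Nat.zero_le n)
  exact ⟨t, ht, hlen⟩

lemma take_of_prefix {s u : List Bool} (h : s <+: u) : u.take s.length = s := by
  obtain ⟨r, rfl⟩ := h; exact List.take_left

lemma lev_mono (hq : IsPerfectTree q) {a b : ℕ} (h : a ≤ b) :
    (lev q a).ncard ≤ (lev q b).ncard := by
  have hsurj : ∀ t ∈ lev q a, ∃ u ∈ lev q b, u.take a = t := by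
    intro t ⟨htq, hlen⟩
    obtain ⟨u, hu, hpre, hlenu⟩ := extend_to hq htq (hlen ▸ h)
    exact ⟨u, ⟨hu, hlenu⟩, by rw [← hlen]; exact take_of_prefix hpre⟩
  have h1 : lev q a ⊆ (fun u => u.take a) '' (lev q b) := by
    intro t ht
    obtain ⟨u, hu, he⟩ := hsurj t ht
    exact ⟨u, hu, he⟩
  calc (lev q a).ncard ≤ ((fun u : List Bool => u.take a) '' (lev q b)).ncard :=
        Set.ncard_le_ncard h1 ((lev_finite q b).image _)
    _ ≤ (lev q b).ncard := Set.ncard_image_le (lev_finite q b)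

lemma lev_grow (hq : IsPerfectTree q) (n : ℕ) :
    ∃ N : ℕ, (lev q n).ncard < (lev q N).ncard := by
  obtain ⟨s₀, hs₀q, hs₀len⟩ := lev_nonempty hq n
  obtain ⟨t₀, ht₀, t₁, ht₁, hp₀, hp₁, hi₀, hi₁⟩ := hq.2 s₀ hs₀q
  set L := max t₀.length t₁.length with hL
  obtain ⟨t₀', ht₀', hp₀', hl₀'⟩ := extend_to hq ht₀ (n := L) (le_max_left _ _)
  obtain ⟨t₁', ht₁', hp₁', hl₁'⟩ := extend_to hq ht₁ (n := L) (le_max_right _ _)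
  have hne : t₀' ≠ t₁' := by
    intro h
    rcases List.prefix_or_prefix_of_prefix hp₀' (h ▸ hp₁') with h2 | h2
    · exact hi₀ h2
    · exact hi₁ h2
  have hs₀t₀' : t₀'.take n = s₀ := by rw [← hs₀len]; exact take_of_prefix (hp₀.trans hp₀')
  have hs₀t₁' : t₁'.take n = s₀ := by rw [← hs₀len]; exact take_of_prefix (hp₁.trans hp₁')
  have hn_le_L : n ≤ L := by
    have h1 := hp₀.length_le
    have h2 : t₀.length ≤ L := le_max_left _ _
    omega
  refine ⟨L, ?_⟩
  have hsub : lev q n ⊆ (fun u : List Bool => u.take n) '' (lev q L \ {t₀'}) := by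
    rintro t ⟨htq, hlen⟩
    by_cases hts : t = s₀
    · refine ⟨t₁', ⟨⟨ht₁', hl₁'⟩, fun h => hne (h.symm)⟩, by show t₁'.take n = t; rw [hs₀t₁', hts]⟩
    · obtain ⟨u, hu, hpre, hlenu⟩ := extend_to hq htq (n := L) (by omega)
      have hut : u.take n = t := by rw [← hlen]; exact take_of_prefix hpre
      have hune : u ≠ t₀' := fun h => hts (by rw [← hut, h, hs₀t₀'])
      exact ⟨u, ⟨⟨hu, hlenu⟩, hune⟩, hut⟩
  have hfin : (lev q L \ {t₀'}).Finite := (lev_finite q L).diff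
  calc (lev q n).ncard
      ≤ ((fun u : List Bool => u.take n) '' (lev q L \ {t₀'})).ncard :=
        Set.ncard_le_ncard hsub (hfin.image _)
    _ ≤ (lev q L \ {t₀'}).ncard := Set.ncard_image_le hfin
    _ < (lev q L).ncard := by
        refine Set.ncard_lt_ncard ?_ (lev_finite q L)
        exact (Set.ssubset_iff_of_subset Set.diff_subset).mpr
          ⟨t₀', ⟨ht₀', hl₀'⟩, fun h => h.2 rfl⟩

lemma lev_unbounded (hq : IsPerfectTree q) (m : ℕ) :
    ∃ N, ∀ n, N ≤ n → m ≤ (lev q n).ncard := by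
  induction m with
  | zero => exact ⟨0, fun n _ => Nat.zero_le _⟩
  | succ m ih =>
      obtain ⟨N, hN⟩ := ih
      obtain ⟨N', hlt⟩ := lev_grow hq N
      refine ⟨N', fun n hn => ?_⟩
      have h1 : m + 1 ≤ (lev q N').ncard := lt_of_le_of_lt (hN N le_rfl) hlt
      exact le_trans h1 (lev_mono hq hn)





/-- The coloring: the parity of the bits of `s` at the positions where the *level*
`s.length` has binary digit `1`. -/
def probe (n : ℕ) (s : List Bool) : ZMod 2 :=
  ∑ j ∈ Finset.range n, if (n.testBit j && s.getD j false) = true then 1 else 0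

/-- The coloring of `2^{<ω}`. -/
def myc (s : List Bool) : Bool := decide (probe s.length s = 1)

lemma zmod2_cases (a : ZMod 2) : a = 0 ∨ a = 1 := by revert a; decide

lemma probe_eq_of_myc_eq {s t : List Bool} (h : myc s = myc t)
    (hlen : s.length = t.length) : probe s.length s = probe t.length t := by
  unfold myc at h
  have h' := decide_eq_decide.mp h
  rcases zmod2_cases (probe s.length s) with h1 | h1 <;>
    rcases zmod2_cases (probe t.length t) with h2 | h2 <;> simp_all

/-- linear functional attached to the level `n` -/
def phi (N : ℕ) (n : ℕ) : (Fin N → ZMod 2) →ₗ[ZMod 2] ZMod 2 :=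
  ∑ j : Fin N, if n.testBit (j : ℕ) = true then LinearMap.proj j else 0

lemma phi_apply (N n : ℕ) (x : Fin N → ZMod 2) :
    phi N n x = ∑ j : Fin N, if n.testBit (j : ℕ) = true then x j else 0 := by
  simp only [phi, LinearMap.coe_sum, Finset.sum_apply]
  refine Finset.sum_congr rfl fun j _ => ?_
  split <;> simp

lemma phi_single (N n : ℕ) (j : Fin N) :
    phi N n (Pi.single j 1) = if n.testBit (j : ℕ) = true then 1 else 0 := by
  rw [phi_apply, Finset.sum_eq_single j]
  · simp
  · intro j' _ hne
    have hz : (Pi.single (M := fun _ : Fin N => ZMod 2) j 1) j' = 0 := by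
      simp [Pi.single_apply, hne]
    rw [hz]; simp
  · intro h; exact absurd (Finset.mem_univ j) h

lemma if_bool_eq {a b : Bool} (h : (if a = true then (1 : ZMod 2) else 0)
    = (if b = true then (1 : ZMod 2) else 0)) : a = b := by
  cases a <;> cases b <;> simp_all

lemma phi_injOn (N : ℕ) : Set.InjOn (phi N) (Set.Iio (2 ^ N)) := by
  intro a ha b hb h
  refine Nat.eq_of_testBit_eq fun j => ?_
  by_cases hj : j < N
  · have h2 := congrArg (fun φ : (Fin N → ZMod 2) →ₗ[ZMod 2] ZMod 2 =>
      φ (Pi.single ⟨j, hj⟩ 1)) h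
    simp only [phi_single] at h2
    exact if_bool_eq h2
  · push_neg at hj
    have hle : (2 : ℕ) ^ N ≤ 2 ^ j := Nat.pow_le_pow_right (by norm_num) hj
    rw [Nat.testBit_eq_false_of_lt (lt_of_lt_of_le ha hle),
      Nat.testBit_eq_false_of_lt (lt_of_lt_of_le hb hle)]

/-- vector of the first `N` entries of a node -/
def toVecN (N : ℕ) (s : List Bool) : Fin N → ZMod 2 :=
  fun j => if s.getD (j : ℕ) false = true then 1 else 0

lemma probe_eq_phi {N n : ℕ} (hNn : N ≤ n) (hn : n < 2 ^ N) (s : List Bool)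
    (hs : s.length = n) : probe n s = phi N n (toVecN N s) := by
  rw [phi_apply]
  unfold probe
  rw [← Finset.sum_subset (Finset.range_subset_range.mpr hNn) (by
    intro j _ hj
    rw [Finset.mem_range, not_lt] at hj
    have : n.testBit j = false :=
      Nat.testBit_eq_false_of_lt (lt_of_lt_of_le hn (Nat.pow_le_pow_right (by norm_num) hj))
    simp [this])]
  rw [← Fin.sum_univ_eq_sum_range (fun j => if (n.testBit j && s.getD j false) = true
      then (1 : ZMod 2) else 0) N]
  refine Finset.sum_congr rfl fun j _ => ?_
  unfold toVecN
  cases hb : n.testBit (j : ℕ) <;> cases hc : s.getD (j : ℕ) false <;> simp [hb, hc]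

lemma toVecN_prefix {N : ℕ} {t s : List Bool} (h : t <+: s) (ht : t.length = N) :
    toVecN N s = toVecN N t := by
  obtain ⟨r, rfl⟩ := h
  funext j
  have hj : (j : ℕ) < t.length := ht ▸ j.2
  unfold toVecN
  rw [List.getD_eq_getElem?_getD, List.getD_eq_getElem?_getD, List.getElem?_append,
    if_pos hj]

lemma toVecN_injOn (N : ℕ) : Set.InjOn (toVecN N) {s : List Bool | s.length = N} := by
  intro s hs t ht h
  refine List.ext_getElem (by simp_all) fun i h1 h2 => ?_
  have hi : i < N := by simp_all
  have h3 := congrFun h ⟨i, hi⟩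
  unfold toVecN at h3
  have h4 := if_bool_eq h3
  simp only [Fin.val_mk] at h4
  rwa [List.getD_eq_getElem _ _ h1, List.getD_eq_getElem _ _ h2] at h4



/-- the set of levels at which `myc` is constant on `q` -/
def monoSet (q : Set (List Bool)) : Set ℕ :=
  {n | ∃ i : Bool, ∀ s ∈ q, s.length = n → myc s = i}

lemma block_bound (hq : IsPerfectTree q) (K : ℕ) :
    (monoSet q ∩ Set.Ico (2 ^ K) (2 ^ (K + 1))).ncard * (lev q (K + 1)).ncard
      ≤ 2 ^ (K + 1) := by
  set N := K + 1 with hN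
  obtain ⟨s₀, hs₀q, hs₀len⟩ := lev_nonempty hq N
  set x₀ : Fin N → ZMod 2 := toVecN N s₀ with hx₀
  set QS : Set (Fin N → ZMod 2) := toVecN N '' lev q N with hQS
  set W : Submodule (ZMod 2) (Fin N → ZMod 2) :=
    Submodule.span (ZMod 2) ((fun x => x - x₀) '' QS) with hW
  have hKN : N ≤ 2 ^ K := Nat.lt_two_pow_self (n := K)
  -- mono levels in the block are taken into the annihilator of W
  have hmaps : ∀ n ∈ monoSet q ∩ Set.Ico (2 ^ K) (2 ^ N),
      phi N n ∈ W.dualAnnihilator := by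
    rintro n ⟨⟨i, hmono⟩, hlo, hhi⟩
    have hNn : N ≤ n := le_trans hKN hlo
    -- all vectors from level N get the same phi value
    have hval : ∀ t ∈ lev q N, phi N n (toVecN N t) = phi N n (toVecN N s₀) := by
      rintro t ⟨htq, htlen⟩
      obtain ⟨u, hu, hpre, hulen⟩ := extend_to hq htq (n := n) (by omega)
      obtain ⟨u₀, hu₀, hpre₀, hu₀len⟩ := extend_to hq hs₀q (n := n) (by omega)
      have h1 : myc u = myc u₀ := by
        rw [hmono u hu hulen, hmono u₀ hu₀ hu₀len]
      have h2 : probe u.length u = probe u₀.length u₀ :=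
        probe_eq_of_myc_eq h1 (by omega)
      rw [hulen, hu₀len] at h2
      rw [probe_eq_phi hNn hhi u hulen, probe_eq_phi hNn hhi u₀ hu₀len] at h2
      rwa [toVecN_prefix hpre htlen, toVecN_prefix hpre₀ hs₀len] at h2
    have hker : W ≤ LinearMap.ker (phi N n) := by
      rw [hW]
      refine Submodule.span_le.mpr ?_
      rintro _ ⟨x, ⟨t, htlev, rfl⟩, rfl⟩
      simp only [SetLike.mem_coe, LinearMap.mem_ker, map_sub]
      rw [hval t htlev, sub_self]
    rw [Submodule.mem_dualAnnihilator]
    intro w hw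
    exact LinearMap.mem_ker.mp (hker hw)
  -- counting
  haveI : Finite (Module.Dual (ZMod 2) (Fin N → ZMod 2)) :=
    Finite.of_injective
      (fun φ : (Fin N → ZMod 2) →ₗ[ZMod 2] ZMod 2 => (φ : (Fin N → ZMod 2) → ZMod 2))
      DFunLike.coe_injective
  have h1 : (monoSet q ∩ Set.Ico (2 ^ K) (2 ^ N)).ncard
      ≤ (W.dualAnnihilator : Set (Module.Dual (ZMod 2) (Fin N → ZMod 2))).ncard := by
    refine Set.ncard_le_ncard_of_injOn (phi N) hmaps ?_ (Set.toFinite _)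
    exact (phi_injOn N).mono (fun n hn => lt_of_lt_of_le hn.2.2 le_rfl)
  have h2 : (lev q N).ncard ≤ (W : Set (Fin N → ZMod 2)).ncard := by
    have e1 : (lev q N).ncard = QS.ncard := by
      rw [hQS]
      exact (Set.ncard_image_of_injOn ((toVecN_injOn N).mono fun s hs => hs.2)).symm
    rw [e1]
    refine Set.ncard_le_ncard_of_injOn (fun x => x - x₀) ?_ ?_ (Set.toFinite _)
    · intro x hx
      exact Submodule.subset_span ⟨x, hx, rfl⟩
    · intro a _ b _ h
      exact sub_left_injective h
  -- cardinalities of the two subspaces multiply to 2 ^ N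
  have hcardW : (W : Set (Fin N → ZMod 2)).ncard = 2 ^ Module.finrank (ZMod 2) W := by
    haveI : Fintype ↥W := Fintype.ofFinite _
    rw [← Nat.card_coe_set_eq, SetLike.coe_sort_coe, Nat.card_eq_fintype_card,
      Module.card_eq_pow_finrank (K := ZMod 2), ZMod.card]
  have hcardA : (W.dualAnnihilator : Set (Module.Dual (ZMod 2) (Fin N → ZMod 2))).ncard
      = 2 ^ Module.finrank (ZMod 2) W.dualAnnihilator := by
    haveI : Fintype ↥W.dualAnnihilator := Fintype.ofFinite _
    rw [← Nat.card_coe_set_eq, SetLike.coe_sort_coe, Nat.card_eq_fintype_card,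
      Module.card_eq_pow_finrank (K := ZMod 2), ZMod.card]
  have hsum : Module.finrank (ZMod 2) W.dualAnnihilator + Module.finrank (ZMod 2) W = N := by
    have e : ((Fin N → ZMod 2) ⧸ W) ≃ₗ[ZMod 2] W.dualAnnihilator :=
      Subspace.quotEquivAnnihilator W
    have e2 := e.finrank_eq
    rw [← e2, Submodule.finrank_quotient_add_finrank]
    simp [Module.finrank_pi (ZMod 2)]
  calc (monoSet q ∩ Set.Ico (2 ^ K) (2 ^ (K + 1))).ncard * (lev q (K + 1)).ncard
      ≤ (W.dualAnnihilator : Set (Module.Dual (ZMod 2) (Fin N → ZMod 2))).ncard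
        * (W : Set (Fin N → ZMod 2)).ncard := Nat.mul_le_mul h1 h2
    _ = 2 ^ (Module.finrank (ZMod 2) W.dualAnnihilator + Module.finrank (ZMod 2) W) := by
        rw [hcardW, hcardA, pow_add]
    _ = 2 ^ (K + 1) := by rw [hsum]

lemma mono_finite (q : Set (List Bool)) (A : Set ℕ) (n : ℕ) :
    (A ∩ Set.Iio n).Finite :=
  (Set.finite_Iio n).subset Set.inter_subset_right

lemma Iio_ncard (n : ℕ) : (Set.Iio n : Set ℕ).ncard = n := by
  rw [← Finset.coe_Iio, Set.ncard_coe_finset, Nat.card_Iio]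

lemma partial_bound (hq : IsPerfectTree q) (m₀ K₀ : ℕ)
    (hm : ∀ K, K₀ ≤ K → m₀ ≤ (lev q (K + 1)).ncard) :
    ∀ L, K₀ ≤ L →
      (monoSet q ∩ Set.Iio (2 ^ L)).ncard * m₀ ≤ 2 ^ K₀ * m₀ + 2 ^ (L + 1) := by
  intro L hL
  induction L, hL using Nat.le_induction with
  | base =>
      have h1 : (monoSet q ∩ Set.Iio (2 ^ K₀)).ncard ≤ 2 ^ K₀ := by
        calc (monoSet q ∩ Set.Iio (2 ^ K₀)).ncard
            ≤ (Set.Iio (2 ^ K₀) : Set ℕ).ncard :=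
              Set.ncard_le_ncard Set.inter_subset_right (Set.finite_Iio _)
          _ = 2 ^ K₀ := Iio_ncard _
      calc (monoSet q ∩ Set.Iio (2 ^ K₀)).ncard * m₀ ≤ 2 ^ K₀ * m₀ :=
            Nat.mul_le_mul_right _ h1
        _ ≤ 2 ^ K₀ * m₀ + 2 ^ (K₀ + 1) := Nat.le_add_right _ _
  | succ L hL ih =>
      have hsplit : monoSet q ∩ Set.Iio (2 ^ (L + 1)) ⊆
          (monoSet q ∩ Set.Iio (2 ^ L)) ∪ (monoSet q ∩ Set.Ico (2 ^ L) (2 ^ (L + 1))) := by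
        rintro n ⟨h1, h2⟩
        by_cases hn : n < 2 ^ L
        · exact Or.inl ⟨h1, hn⟩
        · exact Or.inr ⟨h1, le_of_not_gt hn, h2⟩
      have hu : ((monoSet q ∩ Set.Iio (2 ^ L)) ∪
          (monoSet q ∩ Set.Ico (2 ^ L) (2 ^ (L + 1)))).Finite :=
        (mono_finite q _ _).union (((Set.finite_Ico _ _)).subset Set.inter_subset_right)
      have hstep : (monoSet q ∩ Set.Ico (2 ^ L) (2 ^ (L + 1))).ncard * m₀ ≤ 2 ^ (L + 1) := by
        calc (monoSet q ∩ Set.Ico (2 ^ L) (2 ^ (L + 1))).ncard * m₀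
            ≤ (monoSet q ∩ Set.Ico (2 ^ L) (2 ^ (L + 1))).ncard * (lev q (L + 1)).ncard :=
              Nat.mul_le_mul_left _ (hm L hL)
          _ ≤ 2 ^ (L + 1) := block_bound hq L
      calc (monoSet q ∩ Set.Iio (2 ^ (L + 1))).ncard * m₀
          ≤ ((monoSet q ∩ Set.Iio (2 ^ L)) ∪
              (monoSet q ∩ Set.Ico (2 ^ L) (2 ^ (L + 1)))).ncard * m₀ :=
            Nat.mul_le_mul_right _ (Set.ncard_le_ncard hsplit hu)
        _ ≤ ((monoSet q ∩ Set.Iio (2 ^ L)).ncard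
              + (monoSet q ∩ Set.Ico (2 ^ L) (2 ^ (L + 1))).ncard) * m₀ :=
            Nat.mul_le_mul_right _ (Set.ncard_union_le _ _)
        _ = (monoSet q ∩ Set.Iio (2 ^ L)).ncard * m₀
              + (monoSet q ∩ Set.Ico (2 ^ L) (2 ^ (L + 1))).ncard * m₀ := by ring
        _ ≤ (2 ^ K₀ * m₀ + 2 ^ (L + 1)) + 2 ^ (L + 1) := Nat.add_le_add ih hstep
        _ = 2 ^ K₀ * m₀ + 2 ^ (L + 1 + 1) := by ring

theorem main_density (hq : IsPerfectTree q) :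
    Filter.Tendsto (fun n : ℕ => (((monoSet q) ∩ Set.Iio n).ncard : ℝ) / (n : ℝ))
      Filter.atTop (nhds 0) := by
  rw [Metric.tendsto_atTop]
  intro ε hε
  set m₀ : ℕ := max 1 ⌈(8 : ℝ) / ε⌉₊ with hm₀
  have hm₀pos : 0 < m₀ := lt_of_lt_of_le one_pos (le_max_left _ _)
  have hm₀R : (8 : ℝ) / ε ≤ (m₀ : ℝ) := by
    refine le_trans (Nat.le_ceil _) ?_
    exact_mod_cast le_max_right _ _
  obtain ⟨K₀', hK₀'⟩ := lev_unbounded hq m₀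
  set K₀ := K₀' with hK₀
  have hm : ∀ K, K₀ ≤ K → m₀ ≤ (lev q (K + 1)).ncard := by
    intro K hK
    exact hK₀' (K + 1) (by omega)
  -- choose threshold
  obtain ⟨n₀, hn₀⟩ : ∃ n₀ : ℕ, ((2 : ℝ) ^ K₀) / (ε / 4) < n₀ :=
    exists_nat_gt _
  refine ⟨max (2 ^ K₀) (max n₀ 1), fun n hn => ?_⟩
  have hn1 : 2 ^ K₀ ≤ n := le_trans (le_max_left _ _) hn
  have hn2 : n₀ ≤ n := le_trans (le_trans (le_max_left _ _) (le_max_right _ _)) hn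
  have hn3 : 1 ≤ n := le_trans (le_trans (le_max_right _ _) (le_max_right _ _)) hn
  have hnR : (0 : ℝ) < n := by exact_mod_cast hn3
  set L := Nat.log 2 n with hLdef
  have h2L : 2 ^ L ≤ n := Nat.pow_log_le_self 2 (by omega)
  have hn2L : n < 2 ^ (L + 1) := Nat.lt_pow_succ_log_self (by norm_num) n
  have hK₀L : K₀ ≤ L + 1 := by
    have : (2 : ℕ) ^ K₀ < 2 ^ (L + 1) := lt_of_le_of_lt hn1 hn2L
    have := (Nat.pow_lt_pow_iff_right (a := 2) (by norm_num)).mp this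
    omega
  have hkey : (monoSet q ∩ Set.Iio n).ncard * m₀ ≤ 2 ^ K₀ * m₀ + 4 * n := by
    calc (monoSet q ∩ Set.Iio n).ncard * m₀
        ≤ (monoSet q ∩ Set.Iio (2 ^ (L + 1))).ncard * m₀ := by
          refine Nat.mul_le_mul_right _ (Set.ncard_le_ncard ?_ (mono_finite q _ _))
          exact Set.inter_subset_inter_right _ (fun x hx => lt_trans hx hn2L)
      _ ≤ 2 ^ K₀ * m₀ + 2 ^ (L + 1 + 1) := partial_bound hq m₀ K₀ hm (L + 1) hK₀L
      _ ≤ 2 ^ K₀ * m₀ + 4 * n := by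
          have : (2 : ℕ) ^ (L + 1 + 1) = 4 * 2 ^ L := by ring
          rw [this]
          exact Nat.add_le_add_left (Nat.mul_le_mul_left _ h2L) _
  -- pass to the reals
  have hcast : ((monoSet q ∩ Set.Iio n).ncard : ℝ) * (m₀ : ℝ)
      ≤ (2 : ℝ) ^ K₀ * m₀ + 4 * n := by
    have := hkey
    exact_mod_cast this
  have hm₀R' : (0 : ℝ) < m₀ := by exact_mod_cast hm₀pos
  have h5 : ((monoSet q ∩ Set.Iio n).ncard : ℝ) ≤ ((2 : ℝ) ^ K₀ * m₀ + 4 * n) / m₀ := by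
    rw [le_div_iff₀ hm₀R']
    exact hcast
  have h6 : ((monoSet q ∩ Set.Iio n).ncard : ℝ) / n
      ≤ (((2 : ℝ) ^ K₀ * m₀ + 4 * n) / m₀) / n := (div_le_div_iff_of_pos_right hnR).mpr h5
  have h7 : (((2 : ℝ) ^ K₀ * m₀ + 4 * n) / m₀) / n = (2 : ℝ) ^ K₀ / n + 4 / m₀ := by
    rw [div_div, div_add_div _ _ (ne_of_gt hnR) (ne_of_gt hm₀R'), mul_comm (m₀ : ℝ) (n : ℝ)]
    congr 1
    ring
  have h8 : (2 : ℝ) ^ K₀ / n < ε / 4 := by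
    rw [div_lt_iff₀ hnR]
    have hεpos : (0 : ℝ) < ε / 4 := by positivity
    have hchain : ((2 : ℝ) ^ K₀) / (ε / 4) < (n : ℝ) := by
      refine lt_of_lt_of_le hn₀ ?_
      exact_mod_cast hn2
    calc (2 : ℝ) ^ K₀ = ((2 : ℝ) ^ K₀) / (ε / 4) * (ε / 4) := by field_simp
      _ < (n : ℝ) * (ε / 4) := by
          exact mul_lt_mul_of_pos_right hchain hεpos
      _ = ε / 4 * (n : ℝ) := by ring
  have h9 : (4 : ℝ) / m₀ ≤ ε / 2 := by
    have h8ε : (0 : ℝ) < 8 / ε := by positivity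
    have := div_le_div_of_nonneg_left (by norm_num : (0:ℝ) ≤ 4) h8ε hm₀R
    calc (4 : ℝ) / m₀ ≤ 4 / (8 / ε) := this
      _ = ε / 2 := by field_simp; ring
  have hnonneg : (0 : ℝ) ≤ ((monoSet q ∩ Set.Iio n).ncard : ℝ) / n := by positivity
  rw [Real.dist_eq, sub_zero, abs_of_nonneg hnonneg]
  calc ((monoSet q ∩ Set.Iio n).ncard : ℝ) / n
      ≤ (2 : ℝ) ^ K₀ / n + 4 / m₀ := by rw [← h7]; exact h6
    _ < ε / 4 + ε / 2 := by
        refine add_lt_add_of_lt_of_le h8 h9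
    _ < ε := by linarith

lemma univ_perfect : IsPerfectTree (Set.univ : Set (List Bool)) := by
  constructor
  · refine ⟨⟨[], trivial⟩, fun s _ t _ => trivial, fun s _ => ⟨s ++ [true], trivial,
      List.prefix_append _ _, ?_⟩⟩
    intro h
    simpa using congrArg List.length h
  · intro s _
    refine ⟨s ++ [false], trivial, s ++ [true], trivial, List.prefix_append _ _,
      List.prefix_append _ _, ?_, ?_⟩
    · intro h
      have h2 := h.eq_of_length (by simp)
      simp at h2
    · intro h
      have h2 := h.eq_of_length (by simp)
      simp at h2

lemma dz_mono {A B : Set ℕ} (h : A ⊆ B)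
    (hB : Filter.Tendsto (fun n : ℕ => ((B ∩ Set.Iio n).ncard : ℝ) / (n : ℝ))
      Filter.atTop (nhds 0)) :
    Filter.Tendsto (fun n : ℕ => ((A ∩ Set.Iio n).ncard : ℝ) / (n : ℝ))
      Filter.atTop (nhds 0) := by
  refine squeeze_zero (fun n => by positivity) (fun n => ?_) hB
  have hsub : A ∩ Set.Iio n ⊆ B ∩ Set.Iio n := Set.inter_subset_inter_left _ h
  have hle := Set.ncard_le_ncard hsub ((Set.finite_Iio n).subset Set.inter_subset_right)
  have hleR : ((A ∩ Set.Iio n).ncard : ℝ) ≤ ((B ∩ Set.Iio n).ncard : ℝ) := by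
    exact_mod_cast hle
  gcongr

end Stmt16Aux

/-- There are a perfect tree `p` and a coloring `c` of its nodes such that
`H_c(q)` has density zero for every perfect subtree `q ⊆ p`; consequently,
the density zero ideal is not HL. -/
theorem stmt16 :
    (∃ (p : Set (List Bool)) (c : List Bool → Bool), IsPerfectTree p ∧
      ∀ q : Set (List Bool), IsPerfectTree q → q ⊆ p →
        {n : ℕ | ∃ i : Bool, ∀ s ∈ q, s.length = n → c s = i} ∈ densityZero) ∧
    ¬ IsHLIdeal densityZero := by
  have mainthm : ∀ q : Set (List Bool), IsPerfectTree q →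
      {n : ℕ | ∃ i : Bool, ∀ s ∈ q, s.length = n → Stmt16Aux.myc s = i} ∈ densityZero := by
    intro q hq
    exact Stmt16Aux.main_density hq
  constructor
  · exact ⟨Set.univ, Stmt16Aux.myc, Stmt16Aux.univ_perfect, fun q hq _ => mainthm q hq⟩
  · intro hHL
    obtain ⟨p', A, hAR, hperf, i, hconst⟩ := hHL Stmt16Aux.myc
    have hsub : A ⊆ {n : ℕ | ∃ i : Bool, ∀ s ∈ p', s.length = n → Stmt16Aux.myc s = i} := by
      intro n hnA
      exact ⟨i, fun s hs hlen => hconst s ⟨hs, by rw [hlen]; exact hnA⟩⟩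
    exact hAR.1 (Stmt16Aux.dz_mono hsub (mainthm p' hperf))
end

section
/- Every Halpern–Läuchli ultrafilter is a Z-ultrafilter: if U is an ultrafilter on ω that is a Halpern–Läuchli family, then Z is not Katětov below the dual ideal U^*; that is, there is no function f : ω → ω such that f⁻¹[A] ∈ U^* for every A ∈ Z (equivalently, for every f : ω → ω there exists U ∈ U with f⁻¹[some density zero set] ⊇ U, i.e., there exists A ∈ Z with f⁻¹[A] ∈ U). -/
open Set

lemma aux_card_orth (M : ℕ) (Xv : Set (Fin M → ZMod 2)) (hne : Xv.Nonempty) :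
    Nat.card {u : Fin M → ZMod 2 | ∀ x ∈ Xv, ∀ y ∈ Xv, (∑ q, (x q - y q) * u q) = 0}
      * Nat.card Xv ≤ 2 ^ M := by
  classical
  haveI : Fact (Nat.Prime 2) := ⟨Nat.prime_two⟩
  obtain ⟨x₀, hx₀⟩ := hne
  set D : Submodule (ZMod 2) (Fin M → ZMod 2) :=
    Submodule.span (ZMod 2) ((fun x => x - x₀) '' Xv) with hD
  set Φ : (Fin M → ZMod 2) ≃ₗ[ZMod 2] Module.Dual (ZMod 2) (Fin M → ZMod 2) :=
    (Pi.basisFun (ZMod 2) (Fin M)).toDualEquiv with hΦ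
  have hΦapp : ∀ u v : Fin M → ZMod 2, Φ u v = ∑ q, v q * u q := by
    intro u v
    have hv : v = ∑ q, v q • (Pi.basisFun (ZMod 2) (Fin M)) q := by
      simp [Pi.basisFun_apply]
      ext j; simp [Finset.sum_apply, Pi.single_apply]
    calc Φ u v = Φ u (∑ q, v q • (Pi.basisFun (ZMod 2) (Fin M)) q) := by rw [← hv]
      _ = ∑ q, v q • (Φ u ((Pi.basisFun (ZMod 2) (Fin M)) q)) := by
          rw [map_sum]; simp
      _ = ∑ q, v q * u q := by
          refine Finset.sum_congr rfl fun q _ => ?_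
          rw [hΦ, Module.Basis.toDualEquiv_apply, Module.Basis.toDual_apply_left, Pi.basisFun_repr,
            smul_eq_mul]
  set B : Set (Fin M → ZMod 2) :=
    {u | ∀ x ∈ Xv, ∀ y ∈ Xv, (∑ q, (x q - y q) * u q) = 0} with hB
  have hBeq : B = (Φ.toEquiv) ⁻¹' (D.dualAnnihilator :
      Set (Module.Dual (ZMod 2) (Fin M → ZMod 2))) := by
    ext u
    simp only [hB, Set.mem_setOf_eq, Set.mem_preimage, LinearEquiv.coe_toEquiv, SetLike.mem_coe,
      Submodule.mem_dualAnnihilator]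
    constructor
    · intro h w hw
      have hker : D ≤ LinearMap.ker (Φ u) := by
        rw [hD, Submodule.span_le]
        rintro _ ⟨x, hx, rfl⟩
        simp only [SetLike.mem_coe, LinearMap.mem_ker]
        rw [hΦapp]
        exact h x hx x₀ hx₀
      exact hker hw
    · intro h x hx y hy
      have hxy : x - y ∈ D := by
        have hxy2 : x - y = (x - x₀) - (y - x₀) := by ring
        rw [hxy2]
        exact sub_mem (Submodule.subset_span ⟨x, hx, rfl⟩) (Submodule.subset_span ⟨y, hy, rfl⟩)
      rw [← hΦapp]
      exact h _ hxy
  have hcardB : Nat.card B = Nat.card ((Fin M → ZMod 2) ⧸ D) := by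
    have h1 : Nat.card B = Nat.card (D.dualAnnihilator :
        Set (Module.Dual (ZMod 2) (Fin M → ZMod 2))) := by
      rw [hBeq]
      exact Nat.card_congr (Equiv.subtypeEquiv Φ.toEquiv (fun a => by simp))
    rw [h1]
    exact (Nat.card_congr (Subspace.quotEquivAnnihilator D).toEquiv).symm
  have hcardX : Nat.card Xv ≤ Nat.card D := by
    refine Nat.card_le_card_of_injective
      (fun x => (⟨x.1 - x₀, Submodule.subset_span ⟨x.1, x.2, rfl⟩⟩ : D)) ?_
    intro a b hab
    simp only [Subtype.mk.injEq, sub_left_inj] at hab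
    exact Subtype.ext hab
  have htot : Nat.card (Fin M → ZMod 2) = Nat.card D * Nat.card ((Fin M → ZMod 2) ⧸ D) :=
    Submodule.card_eq_card_quotient_mul_card D
  have hV : Nat.card (Fin M → ZMod 2) = 2 ^ M := by
    simp [Nat.card_eq_fintype_card]
  calc Nat.card B * Nat.card Xv ≤ Nat.card ((Fin M → ZMod 2) ⧸ D) * Nat.card D := by
        rw [hcardB]; exact Nat.mul_le_mul_left _ hcardX
    _ = 2 ^ M := by rw [← hV, htot, Nat.mul_comm]

open Set


def levelSet (p : Set (List Bool)) (n : ℕ) : Set (List Bool) := {s ∈ p | s.length = n}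

lemma levelSet_finite (p : Set (List Bool)) (n : ℕ) : (levelSet p n).Finite := by
  have h : levelSet p n ⊆ (fun g : Fin n → Bool => List.ofFn g) '' Set.univ := by
    rintro s ⟨-, hlen⟩
    refine ⟨fun i => s.get (Fin.cast hlen.symm i), trivial, ?_⟩
    apply List.ext_get (by simp [hlen])
    intro i h1 h2
    simp
  exact Set.Finite.subset ((Set.finite_univ).image _) h

lemma tree_ext_len {p : Set (List Bool)} (hp : IsTree p) :
    ∀ s ∈ p, ∀ L, s.length ≤ L → ∃ t ∈ p, s <+: t ∧ t.length = L := by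
  intro s hs L
  induction L with
  | zero => intro h
            exact ⟨s, hs, List.prefix_refl s, Nat.le_zero.mp h⟩
  | succ L ih =>
    intro hL
    rcases Nat.lt_or_ge s.length (L+1) with h | h
    · obtain ⟨t, ht, hst, htlen⟩ := ih (Nat.lt_succ_iff.mp h)
      obtain ⟨u, hu, htu, hne⟩ := hp.2.2 t ht
      have hulen : L + 1 ≤ u.length := by
        rcases Nat.lt_or_ge u.length (L+1) with h2 | h2
        · exfalso
          have := htu.length_le
          rw [htlen] at this
          have : t = u := htu.eq_of_length (by omega)
          exact hne this
        · exact h2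
      refine ⟨u.take (L+1), hp.2.1 u hu _ (List.take_prefix _ _), ?_, ?_⟩
      · have ht' : t = u.take L := by
          rw [List.prefix_iff_eq_take.mp htu, htlen]
        calc s <+: t := hst
          _ <+: u.take (L+1) := by rw [ht']; exact List.take_prefix_take_left (by omega)
      · simp [List.length_take]; omega
    · refine ⟨s, hs, List.prefix_refl s, by omega⟩

lemma levelSet_nonempty {p : Set (List Bool)} (hp : IsTree p) (n : ℕ) :
    (levelSet p n).Nonempty := by
  obtain ⟨s, hs⟩ := hp.1
  have hnil : ([] : List Bool) ∈ p := hp.2.1 s hs [] (List.nil_prefix)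
  obtain ⟨t, ht, -, htlen⟩ := tree_ext_len hp [] hnil n (by simp)
  exact ⟨t, ht, htlen⟩

lemma levelSet_mono {p : Set (List Bool)} (hp : IsTree p) {n n' : ℕ} (h : n ≤ n') :
    (levelSet p n).ncard ≤ (levelSet p n').ncard := by
  classical
  have hext : ∀ s ∈ levelSet p n, ∃ t, t ∈ levelSet p n' ∧ s <+: t := by
    rintro s ⟨hs, hlen⟩
    obtain ⟨t, ht, hst, htlen⟩ := tree_ext_len hp s hs n' (by omega)
    exact ⟨t, ⟨ht, htlen⟩, hst⟩
  choose g hg1 hg2 using hext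
  refine Set.ncard_le_ncard_of_injOn (fun s => if h : s ∈ levelSet p n then g s h else s)
    (fun s hs => by simp [hs, hg1 s hs]) ?_ (levelSet_finite p n')
  intro a ha b hb hab
  simp only [dif_pos ha, dif_pos hb] at hab
  have ha' : a = (g a ha).take n := by
    have := List.prefix_iff_eq_take.mp (hg2 a ha)
    rwa [ha.2] at this
  have hb' : b = (g b hb).take n := by
    have := List.prefix_iff_eq_take.mp (hg2 b hb)
    rwa [hb.2] at this
  rw [ha', hb', hab]

lemma incomp_family {p : Set (List Bool)} (hp : IsPerfectTree p) (r : ℕ) :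
    ∃ F : Finset (List Bool), ↑F ⊆ p ∧
      (∀ s ∈ F, ∀ t ∈ F, s ≠ t → ¬ s <+: t) ∧ r ≤ F.card := by
  classical
  induction r with
  | zero => exact ⟨∅, by simp, by simp, by simp⟩
  | succ r ih =>
    obtain ⟨F, hFp, hFinc, hFcard⟩ := ih
    rcases Nat.lt_or_ge r F.card with h | h
    · exact ⟨F, hFp, hFinc, h⟩
    have hFr : F.card = r := le_antisymm h hFcard
    rcases F.eq_empty_or_nonempty with rfl | ⟨s, hs⟩
    · -- F empty, so r = 0; need a single node
      obtain ⟨s, hsp⟩ := hp.1.1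
      refine ⟨{s}, by simpa, by simp, ?_⟩
      simp at hFr ⊢
      omega
    · obtain ⟨t₀, ht₀p, t₁, ht₁p, hst₀, hst₁, h01, h10⟩ := hp.2 s (hFp hs)
      have ht01 : t₀ ≠ t₁ := fun h => h01 (h ▸ List.prefix_refl _)
      have hst : ∀ t ∈ ({t₀, t₁} : Finset (List Bool)), t ≠ s := by
        intro t ht hts
        rcases Finset.mem_insert.mp ht with rfl | ht
        · subst hts; exact h01 hst₁
        · simp at ht; subst ht; subst hts; exact h10 hst₀
      have hnotin : ∀ t ∈ ({t₀, t₁} : Finset (List Bool)), t ∉ F.erase s := by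
        intro t ht htF
        have htF' := Finset.mem_of_mem_erase htF
        have hts := Finset.ne_of_mem_erase htF
        have hstpre : s <+: t := by
          rcases Finset.mem_insert.mp ht with rfl | ht2
          · exact hst₀
          · simp at ht2; subst ht2; exact hst₁
        exact hFinc s hs t htF' (fun h => hts h.symm) hstpre
      set F' : Finset (List Bool) := insert t₀ (insert t₁ (F.erase s)) with hF'
      have hF'card : r + 1 ≤ F'.card := by
        rw [hF']
        rw [Finset.card_insert_of_notMem, Finset.card_insert_of_notMem]
        · have := Finset.card_erase_of_mem hs
          have hFpos : 1 ≤ F.card := Finset.card_pos.mpr ⟨s, hs⟩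
          omega
        · exact hnotin t₁ (by simp)
        · intro hmem
          rcases Finset.mem_insert.mp hmem with h' | h'
          · exact ht01 h'
          · exact hnotin t₀ (by simp) h'
      refine ⟨F', ?_, ?_, hF'card⟩
      · intro x hx
        rcases Finset.mem_insert.mp hx with rfl | hx
        · exact ht₀p
        rcases Finset.mem_insert.mp hx with rfl | hx
        · exact ht₁p
        · exact hFp (Finset.mem_of_mem_erase hx)
      · -- pairwise incomparability
        have key : ∀ t, s <+: t → ∀ u ∈ F.erase s, ¬ t <+: u ∧ ¬ u <+: t := by
          intro t hstp u hu
          have huF := Finset.mem_of_mem_erase hu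
          have hus : u ≠ s := Finset.ne_of_mem_erase hu
          constructor
          · intro htu
            exact hFinc s hs u huF (fun h => hus h.symm) (hstp.trans htu)
          · intro hut
            rcases List.prefix_or_prefix_of_prefix hut hstp with h' | h'
            · exact hFinc u huF s hs hus h'
            · exact hFinc s hs u huF (fun h => hus h.symm) h'
        intro a ha b hb hab hpre
        simp only [hF', Finset.mem_insert] at ha hb
        rcases ha with rfl | rfl | ha <;> rcases hb with rfl | rfl | hb
        · exact hab rfl
        · exact h01 hpre
        · exact (key _ hst₀ b hb).1 hpre
        · exact h10 hpre
        · exact hab rfl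
        · exact (key _ hst₁ b hb).1 hpre
        · exact (key _ hst₀ a ha).2 hpre
        · exact (key _ hst₁ a ha).2 hpre
        · exact hFinc a (Finset.mem_of_mem_erase ha) b (Finset.mem_of_mem_erase hb) hab hpre

lemma levelSet_grow {p : Set (List Bool)} (hp : IsPerfectTree p) (r : ℕ) :
    ∃ N₀, ∀ n, N₀ ≤ n → r ≤ (levelSet p n).ncard := by
  classical
  obtain ⟨F, hFp, hFinc, hFcard⟩ := incomp_family hp r
  set N := F.sup List.length with hN
  have hext : ∀ s ∈ F, ∃ t, t ∈ levelSet p N ∧ s <+: t := by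
    intro s hs
    obtain ⟨t, ht, hst, htlen⟩ := tree_ext_len hp.1 s (hFp hs) N (Finset.le_sup hs)
    exact ⟨t, ⟨ht, htlen⟩, hst⟩
  choose g hg1 hg2 using hext
  refine ⟨N, fun n hn => le_trans ?_ (levelSet_mono hp.1 hn)⟩
  have hinj : ∀ a ∈ F, ∀ b ∈ F, ∀ (ha : a ∈ F) (hb : b ∈ F), g a ha = g b hb → a = b := by
    intro a haF b hbF ha hb hab
    by_contra hne
    have hpa := hg2 a ha
    have hpb := hg2 b hb
    rw [hab] at hpa
    rcases List.prefix_or_prefix_of_prefix hpa hpb with h' | h'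
    · exact hFinc a haF b hbF hne h'
    · exact hFinc b hbF a haF (fun h => hne h.symm) h'
  calc r ≤ F.card := hFcard
    _ ≤ (levelSet p N).ncard := by
        have : (F : Set (List Bool)).ncard ≤ (levelSet p N).ncard := by
          refine Set.ncard_le_ncard_of_injOn
            (fun s => if h : s ∈ F then g s h else s) ?_ ?_ (levelSet_finite p N)
          · intro s hs
            simp only [Finset.mem_coe] at hs
            simp [hs, hg1 s hs]
          · intro a ha b hb hab
            simp only [Finset.mem_coe] at ha hb
            simp only [dif_pos ha, dif_pos hb] at hab
            exact hinj a ha b hb ha hb hab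
        simpa using this

def epsZ : Bool → ZMod 2 := fun b => if b then 1 else 0

lemma epsZ_inj : Function.Injective epsZ := by
  intro a b hab
  cases a <;> cases b <;> simp only [epsZ, if_true, if_false] at hab <;>
    first
      | rfl
      | exact absurd hab.symm one_ne_zero
      | exact absurd hab one_ne_zero

def chi (s : List Bool) (m : ℕ) : ZMod 2 :=
  ∑ q ∈ Finset.range s.length, epsZ (s.getD q false) * epsZ (m.testBit q)

lemma chi_prefix {s s' : List Bool} (h : s <+: s') {L m : ℕ} (hlen : s.length = L + 1)
    (hm : m < 2 ^ (L + 1)) : chi s' m = chi s m := by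
  obtain ⟨r, rfl⟩ := h
  unfold chi
  have h1 : ∑ q ∈ Finset.range (s ++ r).length, epsZ ((s ++ r).getD q false) * epsZ (m.testBit q)
      = ∑ q ∈ Finset.range s.length, epsZ ((s ++ r).getD q false) * epsZ (m.testBit q) := by
    refine (Finset.sum_subset ?_ ?_).symm
    · intro q hq
      simp only [Finset.mem_range, List.length_append] at hq ⊢
      omega
    · intro q hq hq'
      simp only [Finset.mem_range] at hq hq'
      have hbit : m.testBit q = false := by
        refine Nat.testBit_eq_false_of_lt (lt_of_lt_of_le hm ?_)
        exact Nat.pow_le_pow_right (by norm_num) (by omega)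
      simp [hbit, epsZ]
  rw [h1]
  exact Finset.sum_congr rfl fun q hq => by
    rw [List.getD_append _ _ _ _ (Finset.mem_range.mp hq)]

def ESet (p : Set (List Bool)) : Set ℕ :=
  {m | m ≠ 0 ∧ ∀ s ∈ levelSet p (Nat.log 2 m + 1), ∀ t ∈ levelSet p (Nat.log 2 m + 1),
    chi s m = chi t m}

lemma chi_eq_finsum {s : List Bool} {M : ℕ} (hlen : s.length = M) (m : ℕ) :
    chi s m = ∑ q : Fin M, epsZ (s.getD q false) * epsZ (m.testBit q) := by
  unfold chi
  rw [hlen, ← Fin.sum_univ_eq_sum_range]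

lemma window_count {p : Set (List Bool)} (hp : IsPerfectTree p) (K : ℕ) :
    (ESet p ∩ Set.Ico (2 ^ K) (2 ^ (K + 1))).ncard * (levelSet p (K + 1)).ncard
      ≤ 2 ^ (K + 1) := by
  classical
  set M := K + 1 with hM
  set svec : List Bool → (Fin M → ZMod 2) := fun s q => epsZ (s.getD q false) with hsvec
  set bvec : ℕ → (Fin M → ZMod 2) := fun m q => epsZ (m.testBit q) with hbvec
  set Xv : Set (Fin M → ZMod 2) := svec '' (levelSet p M) with hXv
  have hXvne : Xv.Nonempty := (levelSet_nonempty hp.1 M).image _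
  set B : Set (Fin M → ZMod 2) :=
    {u | ∀ x ∈ Xv, ∀ y ∈ Xv, (∑ q, (x q - y q) * u q) = 0} with hBdef
  -- map window elements into B
  have hmaps : ∀ m ∈ ESet p ∩ Set.Ico (2 ^ K) (2 ^ (K + 1)), bvec m ∈ B := by
    rintro m ⟨⟨hm0, hE⟩, hlo, hhi⟩
    have hlog : Nat.log 2 m = K := Nat.log_eq_of_pow_le_of_lt_pow hlo hhi
    rintro _ ⟨s, hs, rfl⟩ _ ⟨t, ht, rfl⟩
    have hchi : chi s m = chi t m := by
      apply hE s ?_ t ?_ <;> rwa [hlog]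
    have h1 : ∑ q, (svec s q - svec t q) * bvec m q
        = (∑ q : Fin M, svec s q * bvec m q) - ∑ q : Fin M, svec t q * bvec m q := by
      rw [← Finset.sum_sub_distrib]
      exact Finset.sum_congr rfl fun q _ => by ring
    rw [h1, ← chi_eq_finsum hs.2 m, ← chi_eq_finsum ht.2 m, hchi, sub_self]
  -- injectivity of bvec on the window
  have hinj : Set.InjOn bvec (ESet p ∩ Set.Ico (2 ^ K) (2 ^ (K + 1))) := by
    rintro m ⟨-, -, hm⟩ m' ⟨-, -, hm'⟩ h
    refine Nat.eq_of_testBit_eq fun i => ?_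
    rcases Nat.lt_or_ge i M with hi | hi
    · exact epsZ_inj (congrFun h ⟨i, hi⟩)
    · rw [Nat.testBit_eq_false_of_lt, Nat.testBit_eq_false_of_lt] <;>
        exact lt_of_lt_of_le (by assumption) (Nat.pow_le_pow_right (by norm_num) hi)
  have hcount1 : (ESet p ∩ Set.Ico (2 ^ K) (2 ^ (K + 1))).ncard ≤ Nat.card B := by
    rw [← Nat.card_coe_set_eq]
    refine Nat.card_le_card_of_injective
      (fun m => (⟨bvec m.1, hmaps m.1 m.2⟩ : B)) ?_
    · intro a b hab
      simp only [Subtype.mk.injEq] at hab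
      exact Subtype.ext (hinj a.2 b.2 hab)
  have hcount2 : (levelSet p M).ncard = Nat.card Xv := by
    rw [← Nat.card_coe_set_eq]
    refine Nat.card_congr (Equiv.ofBijective (fun s => ⟨svec s.1, ⟨s.1, s.2, rfl⟩⟩) ?_)
    constructor
    · intro a b hab
      simp only [Subtype.mk.injEq] at hab
      refine Subtype.ext (List.ext_getElem (by rw [a.2.2, b.2.2]) fun i h1 h2 => ?_)
      have hiM : i < M := by rw [← a.2.2]; exact h1
      have := epsZ_inj (congrFun (congrArg Subtype.val hab) ⟨i, hiM⟩)
      simpa [List.getD_eq_getElem?_getD, List.getElem?_eq_getElem, h1, h2] using this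
    · rintro ⟨_, s, hs, rfl⟩
      exact ⟨⟨s, hs⟩, rfl⟩
  calc (ESet p ∩ Set.Ico (2 ^ K) (2 ^ (K + 1))).ncard * (levelSet p M).ncard
      ≤ Nat.card B * Nat.card Xv := by
        rw [hcount2]; exact Nat.mul_le_mul_right _ hcount1
    _ ≤ 2 ^ M := aux_card_orth M Xv hXvne

open Filter

lemma sq_le_two_pow {t : ℕ} (ht : 4 ≤ t) : t * t ≤ 2 ^ t := by
  induction t with
  | zero => omega
  | succ t ih =>
    rcases Nat.lt_or_ge t 4 with h | h
    · interval_cases t <;> revert ht <;> decide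
    · have h1 : 2 * t + 1 ≤ 2 ^ t := by
        clear ih ht
        induction t with
        | zero => omega
        | succ t ih2 =>
          rcases Nat.lt_or_ge t 4 with h2 | h2
          · interval_cases t <;> revert h <;> decide
          · have := ih2 h2
            have h3 : (2:ℕ) ≤ 2 ^ t := by
              calc (2:ℕ) ≤ 2 * t + 1 := by omega
                _ ≤ 2 ^ t := this
            calc 2 * (t+1) + 1 = (2 * t + 1) + 2 := by ring
              _ ≤ 2 ^ t + 2 ^ t := by omega
              _ = 2 ^ (t+1) := by ring
      have := ih h
      calc (t+1) * (t+1) = t * t + (2 * t + 1) := by ring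
        _ ≤ 2 ^ t + 2 ^ t := by omega
        _ = 2 ^ (t+1) := by ring

lemma tendsto_log_div :
    Tendsto (fun N : ℕ => (Nat.log 2 N : ℝ) / N) atTop (nhds 0) := by
  rw [Metric.tendsto_atTop]
  intro ε hε
  obtain ⟨j, hj⟩ := exists_nat_gt (1 / ε)
  refine ⟨2 ^ (max j 4), fun N hN => ?_⟩
  have hN1 : 1 ≤ N := le_trans (Nat.one_le_two_pow) hN
  set t := Nat.log 2 N with hts
  have ht : max j 4 ≤ t := by
    have h2 := Nat.log_mono_right (b := 2) hN
    rwa [Nat.log_pow (by norm_num)] at h2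
  have hjt : j * t ≤ N := by
    calc j * t ≤ t * t := Nat.mul_le_mul_right _ (le_trans (le_max_left _ _) ht)
      _ ≤ 2 ^ t := sq_le_two_pow (le_trans (le_max_right _ _) ht)
      _ ≤ N := Nat.pow_log_le_self 2 (by omega)
  have hj0 : (0:ℝ) < j := by
    have : (0:ℝ) < 1/ε := by positivity
    linarith
  have ht0 : (0:ℝ) < t := by
    have : 4 ≤ t := le_trans (le_max_right _ _) ht
    exact_mod_cast by omega
  have hN0 : (0:ℝ) < N := by exact_mod_cast hN1
  rw [Real.dist_eq, sub_zero, abs_of_nonneg (by positivity)]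
  have h1 : (t : ℝ) / N ≤ 1 / j := by
    rw [div_le_div_iff₀ hN0 hj0]
    have : (j : ℝ) * t ≤ N := by exact_mod_cast hjt
    linarith
  have h2 : 1 / (j:ℝ) < ε := by
    rw [div_lt_iff₀ hj0]
    rw [div_lt_iff₀ hε] at hj
    linarith [mul_comm (j:ℝ) ε]
  linarith

lemma ncard_biUnion_range_le (g : ℕ → Set ℕ) (hg : ∀ K, (g K).Finite) (t : ℕ) :
    (⋃ K ∈ Finset.range t, g K).ncard ≤ ∑ K ∈ Finset.range t, (g K).ncard := by
  clear hg
  induction t with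
  | zero => simp
  | succ t ih =>
    rw [Finset.range_add_one, Finset.set_biUnion_insert,
      Finset.sum_insert Finset.notMem_range_self]
    calc (g t ∪ ⋃ K ∈ Finset.range t, g K).ncard
        ≤ (g t).ncard + (⋃ K ∈ Finset.range t, g K).ncard := Set.ncard_union_le _ _
      _ ≤ (g t).ncard + ∑ K ∈ Finset.range t, (g K).ncard := by omega

lemma D0_density {p : Set (List Bool)} (hp : IsPerfectTree p) (f : ℕ → ℕ) :
    Filter.Tendsto (fun N : ℕ =>
      (((ESet p ∪ f '' {n | 2 ^ n ≤ f n} ∪ {0}) ∩ Set.Iio N).ncard : ℝ) / N)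
      Filter.atTop (nhds 0) := by
  classical
  set D0 : Set ℕ := ESet p ∪ f '' {n | 2 ^ n ≤ f n} ∪ {0} with hD0
  have hEfin : ∀ K : ℕ, (ESet p ∩ Set.Ico (2 ^ K) (2 ^ (K + 1))).Finite :=
    fun K => Set.Finite.subset (Set.finite_Ico _ _) Set.inter_subset_right
  -- counting estimate
  have key : ∀ K₀ r₀ : ℕ, 1 ≤ r₀ → (∀ K, K₀ ≤ K → r₀ ≤ (levelSet p (K + 1)).ncard) →
      ∀ N : ℕ, 1 ≤ N →
      ((D0 ∩ Set.Iio N).ncard : ℝ) ≤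
        ((Nat.log 2 N : ℝ) + 1) * (2 + 2 ^ (K₀ + 1)) + 4 * 2 ^ (Nat.log 2 N) / r₀ := by
    intro K₀ r₀ hr₀1 hgrow N hN1
    set M := Nat.log 2 N with hM
    have hr₀R : (0:ℝ) < r₀ := by exact_mod_cast hr₀1
    have hsub : D0 ∩ Set.Iio N ⊆
        ((⋃ K ∈ Finset.range (M + 1), (ESet p ∩ Set.Ico (2 ^ K) (2 ^ (K + 1))))
          ∪ (f '' {n | 2 ^ n ≤ f n} ∩ Set.Iio N)) ∪ {0} := by
      rintro m ⟨hm, hmN⟩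
      rcases hm with hm | hm
      rcases hm with hm | hm
      · left; left
        have hm0 : m ≠ 0 := hm.1
        have hK : Nat.log 2 m ≤ M := Nat.log_mono_right (le_of_lt hmN)
        exact Set.mem_biUnion (Finset.mem_range.mpr (by omega))
          ⟨hm, Nat.pow_log_le_self 2 hm0, Nat.lt_pow_succ_log_self (by norm_num) m⟩
      · left; right; exact ⟨hm, hmN⟩
      · right; exact hm
    have hcount : (D0 ∩ Set.Iio N).ncard ≤
        (∑ K ∈ Finset.range (M + 1), (ESet p ∩ Set.Ico (2 ^ K) (2 ^ (K + 1))).ncard)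
          + (M + 1) + 1 := by
      have hfin : (((⋃ K ∈ Finset.range (M + 1),
          (ESet p ∩ Set.Ico (2 ^ K) (2 ^ (K + 1))))
          ∪ (f '' {n | 2 ^ n ≤ f n} ∩ Set.Iio N)) ∪ {0}).Finite := by
        refine Set.Finite.union (Set.Finite.union ?_ ?_) (Set.finite_singleton 0)
        · exact Set.Finite.biUnion (Finset.range (M+1)).finite_toSet (fun K _ => hEfin K)
        · exact Set.Finite.subset (Set.finite_Iio N) Set.inter_subset_right
      calc (D0 ∩ Set.Iio N).ncard ≤ _ := Set.ncard_le_ncard hsub hfin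
        _ ≤ ((⋃ K ∈ Finset.range (M + 1), (ESet p ∩ Set.Ico (2 ^ K) (2 ^ (K + 1))))
              ∪ (f '' {n | 2 ^ n ≤ f n} ∩ Set.Iio N)).ncard + ({0} : Set ℕ).ncard :=
          Set.ncard_union_le _ _
        _ ≤ ((⋃ K ∈ Finset.range (M + 1), (ESet p ∩ Set.Ico (2 ^ K) (2 ^ (K + 1))))).ncard
              + (f '' {n | 2 ^ n ≤ f n} ∩ Set.Iio N).ncard + ({0} : Set ℕ).ncard := by
          have := Set.ncard_union_le
            (⋃ K ∈ Finset.range (M + 1), (ESet p ∩ Set.Ico (2 ^ K) (2 ^ (K + 1))))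
            (f '' {n | 2 ^ n ≤ f n} ∩ Set.Iio N)
          omega
        _ ≤ (∑ K ∈ Finset.range (M + 1), (ESet p ∩ Set.Ico (2 ^ K) (2 ^ (K + 1))).ncard)
              + (M + 1) + 1 := by
          have h1 := ncard_biUnion_range_le
            (fun K => ESet p ∩ Set.Ico (2 ^ K) (2 ^ (K + 1))) hEfin (M + 1)
          have h2 : (f '' {n | 2 ^ n ≤ f n} ∩ Set.Iio N).ncard ≤ M + 1 := by
            have hsub2 : f '' {n | 2 ^ n ≤ f n} ∩ Set.Iio N ⊆ f '' Set.Iio (M + 1) := by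
              rintro m ⟨⟨n, hn, rfl⟩, hmN⟩
              refine ⟨n, ?_, rfl⟩
              simp only [Set.mem_Iio]
              have h3 : 2 ^ n ≤ N := le_trans hn (le_of_lt hmN)
              have := (Nat.le_log_iff_pow_le (by norm_num) (by omega)).mpr h3
              omega
            calc (f '' {n | 2 ^ n ≤ f n} ∩ Set.Iio N).ncard
                ≤ (f '' Set.Iio (M + 1)).ncard :=
                  Set.ncard_le_ncard hsub2 ((Set.finite_Iio _).image f)
              _ ≤ (Set.Iio (M + 1)).ncard := Set.ncard_image_le (Set.finite_Iio _)
              _ = M + 1 := by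
                  rw [← Finset.coe_range, Set.ncard_coe_finset, Finset.card_range]
          have h3 : ({0} : Set ℕ).ncard = 1 := Set.ncard_singleton 0
          omega
    have hwin : ∀ K : ℕ, ((ESet p ∩ Set.Ico (2 ^ K) (2 ^ (K + 1))).ncard : ℝ)
        ≤ 2 ^ (K₀ + 1) + 2 ^ (K + 1) / r₀ := by
      intro K
      rcases Nat.lt_or_ge K K₀ with h | h
      · have h1 : (ESet p ∩ Set.Ico (2 ^ K) (2 ^ (K + 1))).ncard ≤ 2 ^ (K₀ + 1) := by
          calc (ESet p ∩ Set.Ico (2 ^ K) (2 ^ (K + 1))).ncard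
              ≤ (Set.Ico (2 ^ K) (2 ^ (K + 1)) : Set ℕ).ncard :=
                Set.ncard_le_ncard Set.inter_subset_right (Set.finite_Ico _ _)
            _ = 2 ^ (K + 1) - 2 ^ K := by
                rw [← Finset.coe_Ico, Set.ncard_coe_finset, Nat.card_Ico]
            _ ≤ 2 ^ (K + 1) := Nat.sub_le _ _
            _ ≤ 2 ^ (K₀ + 1) := Nat.pow_le_pow_right (by norm_num) (by omega)
        have h2 : (0:ℝ) ≤ 2 ^ (K + 1) / r₀ := by positivity
        have h1' : ((ESet p ∩ Set.Ico (2 ^ K) (2 ^ (K + 1))).ncard : ℝ) ≤ 2 ^ (K₀ + 1) := by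
          exact_mod_cast h1
        linarith
      · have h3 : (ESet p ∩ Set.Ico (2 ^ K) (2 ^ (K + 1))).ncard * r₀ ≤ 2 ^ (K + 1) := by
          calc (ESet p ∩ Set.Ico (2 ^ K) (2 ^ (K + 1))).ncard * r₀
              ≤ (ESet p ∩ Set.Ico (2 ^ K) (2 ^ (K + 1))).ncard * (levelSet p (K + 1)).ncard :=
              Nat.mul_le_mul_left _ (hgrow K h)
            _ ≤ 2 ^ (K + 1) := window_count hp K
        have h4 : ((ESet p ∩ Set.Ico (2 ^ K) (2 ^ (K + 1))).ncard : ℝ) ≤ 2 ^ (K + 1) / r₀ := by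
          rw [le_div_iff₀ hr₀R]
          exact_mod_cast h3
        have h5 : (0:ℝ) ≤ 2 ^ (K₀ + 1) := by positivity
        linarith
    have hgs : ∀ t : ℕ, ∑ K ∈ Finset.range t, (2:ℝ) ^ (K + 1) ≤ 2 ^ (t + 1) := by
      intro t
      induction t with
      | zero => norm_num
      | succ t ih =>
        rw [Finset.sum_range_succ]
        have h2 : (2:ℝ) ^ (t + 2) = 2 ^ (t + 1) + 2 ^ (t + 1) := by ring
        calc (∑ K ∈ Finset.range t, (2:ℝ) ^ (K + 1)) + 2 ^ (t + 1)
            ≤ 2 ^ (t + 1) + 2 ^ (t + 1) := by linarith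
          _ = 2 ^ (t + 2) := h2.symm
    have hsum : (∑ K ∈ Finset.range (M + 1),
        ((ESet p ∩ Set.Ico (2 ^ K) (2 ^ (K + 1))).ncard : ℝ))
        ≤ ((M:ℝ) + 1) * 2 ^ (K₀ + 1) + 2 ^ (M + 2) / r₀ := by
      calc (∑ K ∈ Finset.range (M + 1),
          ((ESet p ∩ Set.Ico (2 ^ K) (2 ^ (K + 1))).ncard : ℝ))
          ≤ ∑ K ∈ Finset.range (M + 1), ((2:ℝ) ^ (K₀ + 1) + 2 ^ (K + 1) / r₀) :=
            Finset.sum_le_sum (fun K _ => hwin K)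
        _ = ((M:ℝ) + 1) * 2 ^ (K₀ + 1) + (∑ K ∈ Finset.range (M + 1), (2:ℝ) ^ (K + 1)) / r₀ := by
            rw [Finset.sum_add_distrib, Finset.sum_const, Finset.card_range,
              ← Finset.sum_div]
            push_cast
            ring
        _ ≤ ((M:ℝ) + 1) * 2 ^ (K₀ + 1) + 2 ^ (M + 2) / r₀ := by
            have := hgs (M + 1)
            gcongr
    have hcountR : ((D0 ∩ Set.Iio N).ncard : ℝ) ≤
        (∑ K ∈ Finset.range (M + 1), ((ESet p ∩ Set.Ico (2 ^ K) (2 ^ (K + 1))).ncard : ℝ))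
          + ((M:ℝ) + 1) + 1 := by exact_mod_cast hcount
    have hM1 : (0:ℝ) ≤ (M:ℝ) := Nat.cast_nonneg M
    have hpow : (2:ℝ) ^ (M + 2) = 4 * 2 ^ M := by rw [pow_add]; ring
    calc ((D0 ∩ Set.Iio N).ncard : ℝ)
        ≤ ((M:ℝ) + 1) * 2 ^ (K₀ + 1) + 2 ^ (M + 2) / r₀ + ((M:ℝ) + 1) + 1 := by
          linarith
      _ ≤ ((M:ℝ) + 1) * (2 + 2 ^ (K₀ + 1)) + 4 * 2 ^ M / r₀ := by
          rw [hpow] at *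
          have hexp : ((M:ℝ) + 1) * (2 + 2 ^ (K₀ + 1))
              = ((M:ℝ) + 1) * 2 ^ (K₀ + 1) + 2 * ((M:ℝ) + 1) := by ring
          rw [hexp]
          linarith
  -- the limit argument
  rw [Metric.tendsto_atTop]
  intro ε hε
  obtain ⟨r₀, hr₀⟩ := exists_nat_gt (8 / ε)
  have h8ε : (0:ℝ) < 8 / ε := by positivity
  have hr₀R : (0:ℝ) < r₀ := lt_trans h8ε hr₀
  have hr₀1 : 1 ≤ r₀ := by exact_mod_cast Nat.one_le_iff_ne_zero.mpr (by
    intro h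
    rw [h] at hr₀R
    simp at hr₀R)
  obtain ⟨N₀, hN₀⟩ := levelSet_grow hp r₀
  set C : ℝ := 2 + 2 ^ (N₀ + 1) with hC
  have hC0 : (0:ℝ) < C := by positivity
  have hkey := key N₀ r₀ hr₀1 (fun K hK => hN₀ (K + 1) (by omega))
  have T : Tendsto (fun N : ℕ => ((Nat.log 2 N : ℝ) + 1) * C / N) atTop (nhds 0) := by
    have T1 : Tendsto (fun N : ℕ => ((Nat.log 2 N : ℝ) / N) * C + C / N) atTop (nhds 0) := by
      have := (tendsto_log_div.mul_const C).add (tendsto_const_div_atTop_nhds_zero_nat C)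
      simpa using this
    refine T1.congr fun N => ?_
    rcases Nat.eq_zero_or_pos N with rfl | hN
    · simp
    · have hN0 : (N:ℝ) ≠ 0 := by positivity
      field_simp
  have hev := Filter.eventually_atTop.mp
    (T.eventually_lt_const (show (0:ℝ) < ε / 2 by positivity))
  obtain ⟨N₁, hN₁⟩ := hev
  refine ⟨max N₁ 1, fun N hN => ?_⟩
  have hN1 : 1 ≤ N := le_trans (le_max_right _ _) hN
  have hNN₁ : N₁ ≤ N := le_trans (le_max_left _ _) hN
  have hN0R : (0:ℝ) < N := by exact_mod_cast hN1
  rw [Real.dist_eq, sub_zero, abs_of_nonneg (by positivity)]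
  have hbound := hkey N hN1
  set M := Nat.log 2 N with hM
  have h2MN : (2:ℝ) ^ M ≤ N := by
    exact_mod_cast Nat.pow_log_le_self 2 (by omega)
  have hq1 : ((D0 ∩ Set.Iio N).ncard : ℝ) / N
      ≤ (((M:ℝ) + 1) * C + 4 * 2 ^ M / r₀) / N := by gcongr
  have hq2 : (((M:ℝ) + 1) * C + 4 * 2 ^ M / r₀) / N
      = ((M:ℝ) + 1) * C / N + (4 * 2 ^ M / r₀) / N := by ring
  have hq3 : (4 * (2:ℝ) ^ M / r₀) / N ≤ 4 / r₀ := by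
    rw [div_div, div_le_div_iff₀ (by positivity) hr₀R]
    calc 4 * (2:ℝ) ^ M * r₀ ≤ 4 * N * r₀ := by gcongr
      _ = 4 * (r₀ * N) := by ring
  have hq4 : ((M:ℝ) + 1) * C / N < ε / 2 := hN₁ N hNN₁
  have hq5 : (4:ℝ) / r₀ < ε / 2 := by
    rw [div_lt_iff₀ hr₀R]
    rw [div_lt_iff₀ hε] at hr₀
    linarith
  calc ((D0 ∩ Set.Iio N).ncard : ℝ) / N
      ≤ ((M:ℝ) + 1) * C / N + (4 * 2 ^ M / r₀) / N := by rw [← hq2]; exact hq1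
    _ < ε / 2 + ε / 2 := by linarith
    _ = ε := by ring

/-- Every Halpern–Läuchli ultrafilter is a `Z`-ultrafilter. -/
theorem stmt17 (U : Ultrafilter ℕ) (hU : Filter.cofinite ≤ (U : Filter ℕ))
    (hHL : IsHLFamily {A : Set ℕ | A ∈ U}) :
    ¬ KatetovLE densityZero {A : Set ℕ | Aᶜ ∈ U} := by
  rintro ⟨f, hf⟩
  obtain ⟨p, A, hA, hperf, i, hmono⟩ := hHL (fun s => decide (chi s (f s.length) = 1))
  simp only [Set.mem_setOf_eq] at hA
  set D0 : Set ℕ := ESet p ∪ f '' {n | 2 ^ n ≤ f n} ∪ {0} with hD0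
  have hsub : A ⊆ f ⁻¹' D0 := by
    intro n hn
    by_cases hge : 2 ^ n ≤ f n
    · exact Or.inl (Or.inr ⟨n, hge, rfl⟩)
    push_neg at hge
    by_cases h0 : f n = 0
    · exact Or.inr h0
    refine Or.inl (Or.inl ⟨h0, ?_⟩)
    have hLn : Nat.log 2 (f n) + 1 ≤ n := by
      have := Nat.log_lt_of_lt_pow h0 hge
      omega
    intro s hs t ht
    obtain ⟨s', hs', hss', hs'len⟩ := tree_ext_len hperf.1 s hs.1 n (by rw [hs.2]; omega)
    obtain ⟨t', ht', htt', ht'len⟩ := tree_ext_len hperf.1 t ht.1 n (by rw [ht.2]; omega)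
    have hcs : decide (chi s' (f s'.length) = 1) = i :=
      hmono s' ⟨hs', by rw [hs'len]; exact hn⟩
    have hct : decide (chi t' (f t'.length) = 1) = i :=
      hmono t' ⟨ht', by rw [ht'len]; exact hn⟩
    have hiff : (chi s' (f s'.length) = 1) ↔ (chi t' (f t'.length) = 1) :=
      decide_eq_decide.mp (hcs.trans hct.symm)
    have h2 : ∀ x : ZMod 2, x = 0 ∨ x = 1 := by decide
    have hchi' : chi s' (f n) = chi t' (f n) := by
      rw [hs'len] at hiff
      rw [ht'len] at hiff
      rcases h2 (chi s' (f n)) with h | h <;> rcases h2 (chi t' (f n)) with h' | h'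
      · rw [h, h']
      · exact absurd (h ▸ hiff.mpr h') (by decide)
      · exact absurd (h' ▸ hiff.mp h) (by decide)
      · rw [h, h']
    have hmlt : f n < 2 ^ (Nat.log 2 (f n) + 1) :=
      Nat.lt_pow_succ_log_self (by norm_num) (f n)
    rw [chi_prefix hss' hs.2 hmlt, chi_prefix htt' ht.2 hmlt] at hchi'
    exact hchi'
  have hD0mem : f ⁻¹' D0 ∈ (U : Filter ℕ) := Filter.mem_of_superset hA hsub
  have hdz : D0 ∈ densityZero := D0_density hperf f
  have hcompl : (f ⁻¹' D0)ᶜ ∈ (U : Filter ℕ) := hf D0 hdz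
  have hempty : (∅ : Set ℕ) ∈ (U : Filter ℕ) := by
    have := Filter.inter_mem hD0mem hcompl
    rwa [Set.inter_compl_self] at this
  exact Filter.empty_notMem (U : Filter ℕ) hempty
end
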